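/- For q ∈ ℂ not a root of unity of order ≤ n, the inversion formula for the (r=0, s=0 case) q-binomial-type polynomial holds: x^n = ∑_{k=0}^{n} (−1)^k [n choose k]_q q^{k(k−1)/2} · φ_k(x), where φ_k(x) = ∑_{j=0}^{k} ((q^{−k};q)_j / (q;q)_j) (q x)^j. (This is the s = r = 0 case of the general inversion formula.) -/

import Mathlib

open Finset

/-- q-shifted factorial. -/
noncomputable def qPoch (a q : ℂ) (n : ℕ) : ℂ :=
  ∏ i ∈ Finset.range n, (1 - a * q ^ i)

/-- Gaussian (q-binomial) coefficient. -/
noncomputable def qBinom (q : ℂ) (n k : ℕ) : ℂ :=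
  qPoch q q n / (qPoch q q k * qPoch q q (n - k))

lemma qPoch_zero (a q : ℂ) : qPoch a q 0 = 1 := by simp [qPoch]

lemma qPoch_succ (a q : ℂ) (n : ℕ) : qPoch a q (n + 1) = qPoch a q n * (1 - a * q ^ n) :=
  Finset.prod_range_succ _ _

lemma qPoch_qq_ne_zero {q : ℂ} {n : ℕ} (h : ∀ j, 1 ≤ j → j ≤ n → q ^ j ≠ 1)
    {k : ℕ} (hk : k ≤ n) : qPoch q q k ≠ 0 := by
  unfold qPoch
  rw [Finset.prod_ne_zero_iff]
  intro i hi
  rw [Finset.mem_range] at hi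
  have hq : q * q ^ i = q ^ (i + 1) := by ring
  rw [hq]
  exact sub_ne_zero.mpr (Ne.symm (h (i + 1) (by omega) (by omega)))

lemma qBinom_zero_right {q : ℂ} {n : ℕ} (h : qPoch q q n ≠ 0) : qBinom q n 0 = 1 := by
  unfold qBinom
  rw [qPoch_zero, one_mul, Nat.sub_zero, div_self h]

lemma qBinom_self {q : ℂ} {n : ℕ} (h : qPoch q q n ≠ 0) : qBinom q n n = 1 := by
  unfold qBinom
  rw [Nat.sub_self, qPoch_zero, mul_one, div_self h]

lemma tri (j : ℕ) : j * (j - 1) / 2 + j = (j + 1) * j / 2 := by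
  have h := Nat.choose_two_right (j + 1)
  rw [Nat.choose_succ_succ, Nat.choose_one_right, Nat.choose_two_right, Nat.add_sub_cancel] at h
  omega

lemma qBinom_pascal {q : ℂ} {n : ℕ} (h : ∀ j, 1 ≤ j → j ≤ n → q ^ j ≠ 1)
    {k : ℕ} (hk : k < n) :
    qBinom q (n + 1) (k + 1) = q ^ (k + 1) * qBinom q n (k + 1) + qBinom q n k := by
  obtain ⟨d, rfl⟩ : ∃ d, n = k + d + 1 := ⟨n - k - 1, by omega⟩
  have hPk : qPoch q q k ≠ 0 := qPoch_qq_ne_zero h (by omega)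
  have hPd : qPoch q q d ≠ 0 := qPoch_qq_ne_zero h (by omega)
  have h1 : (1 : ℂ) - q * q ^ k ≠ 0 := by
    have := h (k + 1) (by omega) (by omega)
    rw [pow_succ, mul_comm] at this
    exact sub_ne_zero.mpr (Ne.symm this)
  have h2 : (1 : ℂ) - q * q ^ d ≠ 0 := by
    have := h (d + 1) (by omega) (by omega)
    rw [pow_succ, mul_comm] at this
    exact sub_ne_zero.mpr (Ne.symm this)
  unfold qBinom
  rw [show k + d + 1 + 1 - (k + 1) = d + 1 from by omega,
      show k + d + 1 - (k + 1) = d from by omega,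
      show k + d + 1 - k = d + 1 from by omega,
      show k + d + 1 + 1 = (k + d + 1) + 1 from rfl,
      qPoch_succ q q (k + d + 1), qPoch_succ q q k, qPoch_succ q q d]
  field_simp
  ring

lemma pascal_sum {q : ℂ} {n : ℕ} (h : ∀ j, 1 ≤ j → j ≤ n + 1 → q ^ j ≠ 1) (A : ℕ → ℂ) :
    ∑ k ∈ range (n + 2), qBinom q (n + 1) k * A k
      = ∑ k ∈ range (n + 1), qBinom q n k * (q ^ k * A k + A (k + 1)) := by
  have hn : ∀ j, 1 ≤ j → j ≤ n → q ^ j ≠ 1 := fun j h1 h2 => h j h1 (by omega)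
  have hPn : qPoch q q n ≠ 0 := qPoch_qq_ne_zero h (by omega)
  have hPn1 : qPoch q q (n + 1) ≠ 0 := qPoch_qq_ne_zero h le_rfl
  have lhs : ∑ k ∈ range (n + 2), qBinom q (n + 1) k * A k
      = (∑ m ∈ range n, qBinom q (n + 1) (m + 1) * A (m + 1)) + A 0 + A (n + 1) := by
    rw [show n + 2 = (n + 1) + 1 from rfl, Finset.sum_range_succ, Finset.sum_range_succ',
        qBinom_zero_right hPn1, qBinom_self hPn1, one_mul, one_mul]
  have rhs : ∑ k ∈ range (n + 1), qBinom q n k * (q ^ k * A k + A (k + 1))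
      = (∑ m ∈ range n, (q ^ (m + 1) * qBinom q n (m + 1) + qBinom q n m) * A (m + 1))
          + A 0 + A (n + 1) := by
    have expand : ∀ k ∈ range (n + 1), qBinom q n k * (q ^ k * A k + A (k + 1))
        = qBinom q n k * (q ^ k * A k) + qBinom q n k * A (k + 1) := fun k _ => by ring
    rw [Finset.sum_congr rfl expand, Finset.sum_add_distrib, Finset.sum_range_succ',
        Finset.sum_range_succ (fun k => qBinom q n k * A (k + 1)),
        qBinom_zero_right hPn, qBinom_self hPn, one_mul, pow_zero, one_mul]
    have comb : (∑ m ∈ range n, qBinom q n (m + 1) * (q ^ (m + 1) * A (m + 1)))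
        + ∑ m ∈ range n, qBinom q n m * A (m + 1)
        = ∑ m ∈ range n, (q ^ (m + 1) * qBinom q n (m + 1) + qBinom q n m) * A (m + 1) := by
      rw [← Finset.sum_add_distrib]
      exact Finset.sum_congr rfl fun m _ => by ring
    linear_combination comb
  rw [lhs, rhs]
  congr 1
  congr 1
  refine Finset.sum_congr rfl fun m hm => ?_
  rw [Finset.mem_range] at hm
  rw [qBinom_pascal hn hm]

lemma qbt {q : ℂ} : ∀ k : ℕ, (∀ j, 1 ≤ j → j ≤ k → q ^ j ≠ 1) → ∀ t : ℂ,
    ∏ i ∈ range k, (1 - t * q ^ i)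
      = ∑ j ∈ range (k + 1), (-1) ^ j * qBinom q k j * q ^ (j * (j - 1) / 2) * t ^ j := by
  intro k
  induction k with
  | zero => intro h t; simp [qBinom, qPoch]
  | succ k ih =>
    intro h t
    have step1 : ∑ j ∈ range (k + 2), (-1) ^ j * qBinom q (k + 1) j * q ^ (j * (j - 1) / 2) * t ^ j
        = ∑ j ∈ range (k + 2), qBinom q (k + 1) j * ((fun j => (-1) ^ j * q ^ (j * (j - 1) / 2) * t ^ j) j) :=
      Finset.sum_congr rfl fun j _ => by ring
    rw [step1, pascal_sum h]
    have step2 : ∀ j ∈ range (k + 1),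
        qBinom q k j * (q ^ j * ((fun j => (-1) ^ j * q ^ (j * (j - 1) / 2) * t ^ j) j)
            + (fun j => (-1) ^ j * q ^ (j * (j - 1) / 2) * t ^ j) (j + 1))
        = (1 - t) * ((-1) ^ j * qBinom q k j * q ^ (j * (j - 1) / 2) * (q * t) ^ j) := by
      intro j _
      simp only [Nat.add_sub_cancel]
      rw [← tri j]
      ring
    rw [Finset.sum_congr rfl step2, ← Finset.mul_sum,
        ← ih (fun j h1 h2 => h j h1 (by omega)) (q * t)]
    rw [Finset.prod_range_succ' (fun i => 1 - t * q ^ i) k]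
    simp only [pow_zero, mul_one]
    rw [mul_comm]
    congr 1
    refine Finset.prod_congr rfl fun i _ => ?_
    ring

lemma main_id {q : ℂ} : ∀ n : ℕ, (∀ j, 1 ≤ j → j ≤ n → q ^ j ≠ 1) → ∀ x : ℂ,
    x ^ n = ∑ k ∈ range (n + 1), qBinom q n k * ∏ m ∈ range k, (x - q ^ m) := by
  intro n
  induction n with
  | zero => intro h x; simp [qBinom, qPoch]
  | succ n ih =>
    intro h x
    rw [show n + 1 + 1 = n + 2 from rfl, pascal_sum h (fun k => ∏ m ∈ range k, (x - q ^ m))]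
    have step : ∀ k ∈ range (n + 1),
        qBinom q n k * (q ^ k * ((fun k => ∏ m ∈ range k, (x - q ^ m)) k)
            + (fun k => ∏ m ∈ range k, (x - q ^ m)) (k + 1))
        = x * (qBinom q n k * ∏ m ∈ range k, (x - q ^ m)) := by
      intro k _
      simp only
      rw [Finset.prod_range_succ]
      ring
    rw [Finset.sum_congr rfl step, ← Finset.mul_sum,
        ← ih (fun j h1 h2 => h j h1 (by omega)) x]
    ring

lemma coeff_eq {q : ℂ} (hq0 : q ≠ 0) {k : ℕ} (h : ∀ i, 1 ≤ i → i ≤ k → q ^ i ≠ 1)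
    {j : ℕ} (hj : j ≤ k) :
    qPoch ((q ^ k)⁻¹) q j / qPoch q q j
      = (-1) ^ j * qBinom q k j * q ^ (j * (j - 1) / 2) * ((q ^ k)⁻¹) ^ j := by
  have hqk : (q : ℂ) ^ k ≠ 0 := pow_ne_zero _ hq0
  have hPj : qPoch q q j ≠ 0 := qPoch_qq_ne_zero h hj
  have hPkj : qPoch q q (k - j) ≠ 0 := qPoch_qq_ne_zero h (by omega)
  have hPk : qPoch q q k ≠ 0 := qPoch_qq_ne_zero h le_rfl
  have prod1 : qPoch ((q ^ k)⁻¹) q j * (q ^ k) ^ j = ∏ i ∈ range j, (q ^ k - q ^ i) := by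
    calc qPoch ((q ^ k)⁻¹) q j * (q ^ k) ^ j
        = (∏ i ∈ range j, (1 - (q ^ k)⁻¹ * q ^ i)) * ∏ _i ∈ range j, q ^ k := by
          rw [qPoch, Finset.prod_const, Finset.card_range]
      _ = ∏ i ∈ range j, ((1 - (q ^ k)⁻¹ * q ^ i) * q ^ k) := by
          rw [← Finset.prod_mul_distrib]
      _ = ∏ i ∈ range j, (q ^ k - q ^ i) := by
          refine Finset.prod_congr rfl fun i _ => ?_
          field_simp
  have prod2 : ∏ i ∈ range j, (q ^ k - q ^ i)
      = (-1) ^ j * q ^ (j * (j - 1) / 2) * ∏ i ∈ range j, (1 - q ^ (k - i)) := by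
    have step : ∀ i ∈ range j, (q ^ k - q ^ i) = (-1) * q ^ i * (1 - q ^ (k - i)) := by
      intro i hi
      rw [Finset.mem_range] at hi
      have hq : q ^ i * q ^ (k - i) = q ^ k := by
        rw [← pow_add, show i + (k - i) = k from by omega]
      linear_combination -hq
    rw [Finset.prod_congr rfl step, Finset.prod_mul_distrib, Finset.prod_mul_distrib,
        Finset.prod_const, Finset.card_range, Finset.prod_pow_eq_pow_sum,
        Finset.sum_range_id]
  have prod3 : qPoch q q k = qPoch q q (k - j) * ∏ i ∈ range j, (1 - q ^ (k - i)) := by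
    obtain ⟨d, rfl⟩ : ∃ d, k = d + j := ⟨k - j, by omega⟩
    rw [show d + j - j = d from by omega, qPoch, Finset.prod_range_add, ← qPoch]
    congr 1
    rw [← Finset.prod_range_reflect (fun i => 1 - q * q ^ (d + i)) j]
    refine Finset.prod_congr rfl fun i hi => ?_
    rw [Finset.mem_range] at hi
    have : q * q ^ (d + (j - 1 - i)) = q ^ (d + j - i) := by
      rw [← pow_succ', show d + (j - 1 - i) + 1 = d + j - i from by omega]
    rw [this]
  have star : qPoch ((q ^ k)⁻¹) q j * (q ^ k) ^ j * qPoch q q (k - j)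
      = (-1) ^ j * q ^ (j * (j - 1) / 2) * qPoch q q k := by
    rw [prod1, prod2, prod3]
    ring
  have hqkj : ((q : ℂ) ^ k) ^ j ≠ 0 := pow_ne_zero _ hqk
  unfold qBinom
  rw [inv_pow]
  field_simp
  rw [one_div]
  linear_combination star

lemma phi_eq {q : ℂ} (hq0 : q ≠ 0) {k : ℕ} (h : ∀ i, 1 ≤ i → i ≤ k → q ^ i ≠ 1) (x : ℂ) :
    q ^ (k * (k - 1) / 2)
        * ∑ j ∈ range (k + 1), qPoch ((q ^ k)⁻¹) q j / qPoch q q j * (q * x) ^ j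
      = (-1) ^ k * ∏ m ∈ range k, (x - q ^ m) := by
  have hqk : (q : ℂ) ^ k ≠ 0 := pow_ne_zero _ hq0
  have hsum : ∀ j ∈ range (k + 1), qPoch ((q ^ k)⁻¹) q j / qPoch q q j * (q * x) ^ j
      = (-1) ^ j * qBinom q k j * q ^ (j * (j - 1) / 2) * (q * x * (q ^ k)⁻¹) ^ j := by
    intro j hj
    rw [Finset.mem_range] at hj
    rw [coeff_eq hq0 h (by omega), mul_pow (q * x) ((q ^ k)⁻¹) j]
    ring
  rw [Finset.sum_congr rfl hsum, ← qbt k h (q * x * (q ^ k)⁻¹)]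
  have e1 : (q : ℂ) ^ (k * (k - 1) / 2) = ∏ i ∈ range k, q ^ (k - 1 - i) := by
    rw [Finset.prod_pow_eq_pow_sum, Finset.sum_range_reflect (fun i => i) k,
        Finset.sum_range_id]
  rw [e1, ← Finset.prod_mul_distrib]
  have e2 : ∀ i ∈ range k, q ^ (k - 1 - i) * (1 - q * x * (q ^ k)⁻¹ * q ^ i)
      = q ^ (k - 1 - i) - x := by
    intro i hi
    rw [Finset.mem_range] at hi
    have hq : q ^ (k - 1 - i) * q * q ^ i = q ^ k := by
      rw [mul_assoc, ← pow_succ', ← pow_add, show k - 1 - i + (i + 1) = k from by omega]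
    field_simp
    linear_combination -x * hq
  rw [Finset.prod_congr rfl e2]
  have e3 : ∀ i ∈ range k, q ^ (k - 1 - i) - x = (-1) * (x - q ^ (k - 1 - i)) :=
    fun i _ => by ring
  rw [Finset.prod_congr rfl e3, Finset.prod_mul_distrib, Finset.prod_const, Finset.card_range]
  congr 1
  exact Finset.prod_range_reflect (fun m => x - q ^ m) k

/-- the `r = s = 0` inversion formula
`x^n = ∑_{k=0}^n (−1)^k [n choose k]_q q^{k(k−1)/2} φ_k(x)` with
`φ_k(x) = ∑_{j=0}^k ((q^{−k};q)_j/(q;q)_j) (qx)^j`. -/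
theorem inversion_r0_s0 (q : ℂ) (n : ℕ) (hq0 : q ≠ 0)
    (hq1 : ∀ j, 1 ≤ j → j ≤ n → q ^ j ≠ 1) (x : ℂ) :
    x ^ n = ∑ k ∈ Finset.range (n + 1),
      (-1) ^ k * qBinom q n k * q ^ (k * (k - 1) / 2) *
        (∑ j ∈ Finset.range (k + 1), qPoch ((q ^ k)⁻¹) q j / qPoch q q j * (q * x) ^ j) := by
  have hterm : ∀ k ∈ range (n + 1),
      (-1) ^ k * qBinom q n k * q ^ (k * (k - 1) / 2) *
        (∑ j ∈ Finset.range (k + 1), qPoch ((q ^ k)⁻¹) q j / qPoch q q j * (q * x) ^ j)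
      = qBinom q n k * ∏ m ∈ range k, (x - q ^ m) := by
    intro k hk
    rw [Finset.mem_range] at hk
    have hk' : ∀ i, 1 ≤ i → i ≤ k → q ^ i ≠ 1 := fun i h1 h2 => hq1 i h1 (by omega)
    have hphi := phi_eq hq0 hk' x
    calc (-1) ^ k * qBinom q n k * q ^ (k * (k - 1) / 2) *
          (∑ j ∈ Finset.range (k + 1), qPoch ((q ^ k)⁻¹) q j / qPoch q q j * (q * x) ^ j)
        = (-1) ^ k * qBinom q n k * (q ^ (k * (k - 1) / 2) *
            ∑ j ∈ Finset.range (k + 1), qPoch ((q ^ k)⁻¹) q j / qPoch q q j * (q * x) ^ j) := by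
          ring
      _ = (-1) ^ k * qBinom q n k * ((-1) ^ k * ∏ m ∈ range k, (x - q ^ m)) := by rw [hphi]
      _ = ((-1) ^ k * (-1) ^ k) * (qBinom q n k * ∏ m ∈ range k, (x - q ^ m)) := by ring
      _ = qBinom q n k * ∏ m ∈ range k, (x - q ^ m) := by
          rw [← mul_pow]
          norm_num
  rw [Finset.sum_congr rfl hterm]
  exact main_id n hq1 x
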